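/- Let n be a positive integer and let a ≤ b be real numbers. Then ∫_a^b log|1 − e^{inθ}| dθ = (D(na) − D(nb))/n. -/

import Mathlib

open MeasureTheory intervalIntegral Filter Set Topology

/-- `D θ` is the Bloch–Wigner dilogarithm of `e^{iθ}`, given by the series
`Σ_{j=1}^∞ sin(jθ)/j²`. -/
noncomputable def blochWignerD (θ : ℝ) : ℝ :=
  ∑' j : ℕ, Real.sin ((j + 1) * θ) / ((j : ℝ) + 1) ^ 2

local notation "π" => Real.pi

/-- the integrand -/
noncomputable def logDist (t : ℝ) : ℝ := Real.log (‖1 - Complex.exp (t * Complex.I)‖)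

lemma abs_one_sub_exp (t : ℝ) :
    ‖1 - Complex.exp (t * Complex.I)‖ = 2 * |Real.sin (t / 2)| := by
  have h : (1 : ℂ) - Complex.exp (t * Complex.I)
      = Complex.ofReal (1 - Real.cos t) + Complex.ofReal (-Real.sin t) * Complex.I := by
    rw [Complex.exp_mul_I]
    push_cast
    ring
  have hcos : 1 - Real.cos t = 2 * Real.sin (t / 2) ^ 2 := by
    have h1 := Real.cos_two_mul (t / 2)
    rw [show 2 * (t / 2) = t by ring] at h1
    have h2 := Real.sin_sq_add_cos_sq (t / 2)
    nlinarith
  rw [h, Complex.norm_def, Complex.normSq_apply]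
  simp only [Complex.add_re, Complex.ofReal_re, Complex.mul_re, Complex.I_re, Complex.I_im,
    Complex.ofReal_im, Complex.add_im, Complex.mul_im]
  have h3 := Real.sin_sq_add_cos_sq t
  have : (1 - Real.cos t + (-Real.sin t * 0 - 0 * 1)) * (1 - Real.cos t + (-Real.sin t * 0 - 0 * 1))
      + (0 + (-Real.sin t * 1 + 0 * 0)) * (0 + (-Real.sin t * 1 + 0 * 0))
      = (2 * |Real.sin (t / 2)|) ^ 2 := by
    rw [mul_pow, sq_abs]
    nlinarith
  rw [this, Real.sqrt_sq (by positivity)]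

lemma logDist_neg (t : ℝ) : logDist (-t) = logDist t := by
  unfold logDist
  rw [abs_one_sub_exp, abs_one_sub_exp, neg_div, Real.sin_neg, abs_neg]

lemma measurable_logDist : Measurable logDist := by
  apply Real.measurable_log.comp
  exact (continuous_norm.comp
    (continuous_const.sub (Complex.continuous_exp.comp
      (Complex.continuous_ofReal.mul continuous_const)))).measurable

lemma logDist_periodic : Function.Periodic logDist (2 * π) := by
  intro t
  simp only [logDist, abs_one_sub_exp]
  rw [show (t + 2 * π) / 2 = t / 2 + π by ring, Real.sin_add_pi, abs_neg]

lemma logDist_int_base : IntervalIntegrable logDist volume 0 π := by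
  have hbound : IntervalIntegrable (fun t : ℝ => 2 * t ^ (-2⁻¹ : ℝ) + 3) volume 0 π :=
    ((intervalIntegral.intervalIntegrable_rpow' (by norm_num)).const_mul 2).add
      intervalIntegrable_const
  apply hbound.mono_fun (measurable_logDist.aestronglyMeasurable)
  filter_upwards [ae_restrict_mem measurableSet_uIoc] with t ht
  rw [Set.uIoc_of_le Real.pi_pos.le] at ht
  obtain ⟨ht0, htpi⟩ := ht
  -- basic facts
  have hs_pos : 0 < Real.sin (t / 2) :=
    Real.sin_pos_of_pos_of_lt_pi (by linarith) (by linarith [Real.pi_pos])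
  have habs : |Real.sin (t / 2)| = Real.sin (t / 2) := abs_of_pos hs_pos
  have h_up : 2 * Real.sin (t / 2) ≤ t := by
    have := Real.sin_le (x := t / 2) (by linarith)
    linarith
  have h_low : 2 / π * t ≤ 2 * Real.sin (t / 2) := by
    have := Real.mul_le_sin (x := t / 2) (by linarith) (by linarith)
    calc 2 / π * t = 2 * (2 / π * (t / 2)) := by ring
    _ ≤ 2 * Real.sin (t / 2) := by linarith
  have hpi_pos := Real.pi_pos
  have hlow_pos : 0 < 2 / π * t := by positivity
  -- |logDist t| ≤ |log t| + log (π/2)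
  have hlogpi2 : (0:ℝ) ≤ Real.log (π / 2) :=
    Real.log_nonneg (by linarith [Real.two_le_pi])
  have key : |logDist t| ≤ |Real.log t| + Real.log (π / 2) := by
    rw [abs_le]
    constructor
    · have h1 : Real.log (2 / π * t) ≤ logDist t := by
        rw [logDist, abs_one_sub_exp, habs]
        exact Real.log_le_log hlow_pos h_low
      have h2 : Real.log (2 / π * t) = Real.log t - Real.log (π / 2) := by
        rw [show 2 / π * t = t / (π / 2) by field_simp,
          Real.log_div (by linarith) (by positivity)]
      have h3 : -|Real.log t| ≤ Real.log t := neg_abs_le _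
      linarith
    · have h1 : logDist t ≤ Real.log t := by
        rw [logDist, abs_one_sub_exp, habs]
        exact Real.log_le_log (by positivity) h_up
      have h3 : Real.log t ≤ |Real.log t| := le_abs_self _
      linarith
  -- |log t| ≤ 2 * t ^ (-1/2) + 2
  have hrpow_pos : (0:ℝ) < t ^ (-2⁻¹ : ℝ) := Real.rpow_pos_of_pos ht0 _
  have key2 : |Real.log t| ≤ 2 * t ^ (-2⁻¹ : ℝ) + 2 := by
    rcases le_or_gt t 1 with h1 | h1
    · have hneg : Real.log t ≤ 0 := Real.log_nonpos ht0.le h1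
      rw [abs_of_nonpos hneg]
      have hu := Real.log_le_sub_one_of_pos hrpow_pos
      rw [Real.log_rpow ht0] at hu
      nlinarith
    · have hpos : 0 ≤ Real.log t := Real.log_nonneg h1.le
      rw [abs_of_nonneg hpos]
      have hsq := Real.log_le_sub_one_of_pos (Real.sqrt_pos.mpr ht0)
      rw [Real.log_sqrt ht0.le] at hsq
      have h4 : Real.sqrt t ≤ 2 := by
        have : Real.sqrt t ≤ Real.sqrt 4 := Real.sqrt_le_sqrt (by linarith [Real.pi_le_four])
        rwa [show (4:ℝ) = 2 ^ 2 by norm_num, Real.sqrt_sq (by norm_num)] at this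
      nlinarith
  have hlog_pi2 : Real.log (π / 2) ≤ 1 := by
    have := Real.log_le_sub_one_of_pos (show (0:ℝ) < π / 2 by linarith)
    linarith [Real.pi_le_four]
  have : |logDist t| ≤ 2 * t ^ (-2⁻¹ : ℝ) + 3 := by linarith
  calc ‖logDist t‖ = |logDist t| := rfl
  _ ≤ 2 * t ^ (-2⁻¹ : ℝ) + 3 := this
  _ ≤ ‖2 * t ^ (-2⁻¹ : ℝ) + 3‖ := le_abs_self _

lemma logDist_int_sym : IntervalIntegrable logDist volume (-π) π := by
  have h2 : IntervalIntegrable (fun x => logDist (-x)) volume (-0) (-π) :=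
    (IntervalIntegrable.iff_comp_neg).mp logDist_int_base
  have h3 : IntervalIntegrable logDist volume (-π) 0 := by
    have : (fun x => logDist (-x)) = logDist := funext logDist_neg
    rw [this] at h2
    simpa using h2.symm
  exact h3.trans logDist_int_base

lemma logDist_shift (k : ℤ) :
    IntervalIntegrable logDist volume (-π + k * (2 * π)) (π + k * (2 * π)) := by
  have h := logDist_int_sym.comp_sub_right ((k : ℝ) * (2 * π))
  have he : (fun x => logDist (x - (k : ℝ) * (2 * π))) = logDist :=
    funext fun x => (logDist_periodic.int_mul k).sub_eq x
  rwa [he] at h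

lemma logDist_int (a b : ℝ) : IntervalIntegrable logDist volume a b := by
  have hpi := Real.pi_pos
  have chain : ∀ n : ℕ,
      IntervalIntegrable logDist volume (-π - n * (2 * π)) (π + n * (2 * π)) := by
    intro n
    induction n with
    | zero => simpa using logDist_int_sym
    | succ n ih =>
      have hR : IntervalIntegrable logDist volume (π + n * (2 * π)) (π + (n + 1 : ℕ) * (2 * π)) := by
        have h := logDist_shift ((n : ℤ) + 1)
        have e1 : -π + ((n : ℤ) + 1 : ℤ) * (2 * π) = π + (n : ℝ) * (2 * π) := by push_cast; ring
        have e2 : (π + ((n : ℤ) + 1 : ℤ) * (2 * π) : ℝ) = π + ((n : ℕ) + 1 : ℕ) * (2 * π) := by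
          push_cast; ring
        rwa [e1, e2] at h
      have hL : IntervalIntegrable logDist volume (-π - (n + 1 : ℕ) * (2 * π))
          (-π - n * (2 * π)) := by
        have h := logDist_shift (-((n : ℤ) + 1))
        have e1 : (-π + (-((n : ℤ) + 1) : ℤ) * (2 * π) : ℝ) = -π - ((n : ℕ) + 1 : ℕ) * (2 * π) := by
          push_cast; ring
        have e2 : (π + (-((n : ℤ) + 1) : ℤ) * (2 * π) : ℝ) = -π - (n : ℝ) * (2 * π) := by
          push_cast; ring
        rwa [e1, e2] at h
      exact (hL.trans ih).trans hR
  obtain ⟨n, hn⟩ := exists_nat_ge (|a| + |b|)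
  apply (chain n).mono_set
  have h1 : (1 : ℝ) ≤ 2 * π := by linarith [Real.two_le_pi]
  have hn' : |a| + |b| ≤ (n : ℝ) * (2 * π) := by
    calc |a| + |b| ≤ (n : ℝ) := hn
    _ = (n : ℝ) * 1 := by ring
    _ ≤ (n : ℝ) * (2 * π) := by
        apply mul_le_mul_of_nonneg_left h1 (Nat.cast_nonneg n)
  have hnn : (0:ℝ) ≤ (n : ℝ) * (2 * π) := by positivity
  have hlo : -π - n * (2 * π) ≤ π + n * (2 * π) := by linarith
  rw [Set.uIcc_subset_uIcc_iff_mem, Set.uIcc_of_le hlo]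
  constructor
  · exact ⟨by linarith [neg_abs_le a, abs_nonneg b], by linarith [le_abs_self a, abs_nonneg b]⟩
  · exact ⟨by linarith [neg_abs_le b, abs_nonneg a], by linarith [le_abs_self b, abs_nonneg a]⟩

lemma taylor_hasSum (r : ℝ) (hr0 : 0 ≤ r) (hr1 : r < 1) (t : ℝ) :
    HasSum (fun n : ℕ => -(r ^ (n + 1) * Real.cos (((n : ℝ) + 1) * t) / ((n : ℝ) + 1)))
      (Real.log (‖1 - r * Complex.exp (t * Complex.I)‖)) := by
  set w : ℂ := Complex.exp (t * Complex.I) with hw_def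
  have hw : ‖w‖ = 1 := Complex.norm_exp_ofReal_mul_I t
  have hz : ‖(-(↑r * w) : ℂ)‖ < 1 := by
    rw [norm_neg, norm_mul, hw, Complex.norm_real, Real.norm_eq_abs, abs_of_nonneg hr0]
    simpa using hr1
  have H := Complex.hasSum_taylorSeries_log hz
  rw [show (1 : ℂ) + -(↑r * w) = 1 - ↑r * w by ring] at H
  have H2 := H.mapL Complex.reCLM
  have H3 := (hasSum_nat_add_iff' 1).mpr H2
  have hzero : ∑ i ∈ Finset.range 1, Complex.reCLM ((-1) ^ (i + 1) * (-(↑r * w)) ^ i / (i : ℂ)) = 0 := by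
    simp
  rw [hzero, sub_zero, Complex.reCLM_apply, Complex.log_re] at H3
  convert H3 using 2 with n
  · rfl
  rw [Complex.reCLM_apply]
  have key : ((-1 : ℂ)) ^ (n + 1 + 1) * (-(↑r * w)) ^ (n + 1) / ((n + 1 : ℕ) : ℂ)
      = ↑(-(r ^ (n + 1) / ((n : ℝ) + 1))) * Complex.exp (↑(((n : ℝ) + 1) * t) * Complex.I) := by
    have hwpow : Complex.exp (↑(((n : ℝ) + 1) * t) * Complex.I) = w ^ (n + 1) := by
      rw [hw_def, ← Complex.exp_nat_mul]
      congr 1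
      push_cast
      ring
    have hsign : ((-1 : ℂ)) ^ (n + 1 + 1) * (-1 : ℂ) ^ (n + 1) = -1 := by
      rw [← pow_add]
      exact Odd.neg_one_pow ⟨n + 1, by ring⟩
    have hnp : (-(↑r * w) : ℂ) ^ (n + 1) = (-1 : ℂ) ^ (n + 1) * (↑r * w) ^ (n + 1) := by
      rw [neg_pow]
    rw [hwpow, hnp, show ((-1:ℂ))^(n+1+1) * ((-1:ℂ)^(n+1) * (↑r * w)^(n+1)) / ((n+1:ℕ):ℂ)
        = (((-1:ℂ))^(n+1+1) * (-1:ℂ)^(n+1)) * ((↑r * w)^(n+1) / ((n+1:ℕ):ℂ)) by ring, hsign]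
    push_cast
    ring
  rw [key, Complex.re_ofReal_mul, Complex.exp_ofReal_mul_I_re]
  ring

lemma integral_r_lt_one (r : ℝ) (hr0 : 0 ≤ r) (hr1 : r < 1) (x : ℝ) :
    ∫ t in (0:ℝ)..x, Real.log (‖1 - r * Complex.exp (t * Complex.I)‖)
      = -∑' n : ℕ, r ^ (n + 1) * Real.sin (((n : ℝ) + 1) * x) / ((n : ℝ) + 1) ^ 2 := by
  set g : ℕ → ℝ → ℝ := fun n y => -(r ^ (n + 1)) / ((n : ℝ) + 1) ^ 2 * Real.sin (((n : ℝ) + 1) * y)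
    with hg_def
  set g' : ℕ → ℝ → ℝ := fun n y =>
    -(r ^ (n + 1)) / ((n : ℝ) + 1) ^ 2 * (Real.cos (((n : ℝ) + 1) * y) * ((n : ℝ) + 1))
    with hg'_def
  have hderiv : ∀ n y, HasDerivAt (g n) (g' n y) y := by
    intro n y
    have h1 : HasDerivAt (fun y : ℝ => ((n : ℝ) + 1) * y) ((n : ℝ) + 1) y := by
      simpa using (hasDerivAt_id y).const_mul ((n : ℝ) + 1)
    exact ((Real.hasDerivAt_sin (((n : ℝ) + 1) * y)).comp y h1).const_mul _
  have hbound : ∀ n y, ‖g' n y‖ ≤ r ^ (n + 1) := by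
    intro n y
    have hc1 : (0:ℝ) < (n : ℝ) + 1 := by positivity
    rw [hg'_def]
    rw [Real.norm_eq_abs, abs_mul, abs_div, abs_neg, abs_mul,
      abs_of_nonneg (pow_nonneg hr0 (n+1)), abs_of_pos (by positivity : (0:ℝ) < ((n:ℝ)+1)^2),
      abs_of_pos hc1]
    rw [div_mul_eq_mul_div, div_le_iff₀ (by positivity)]
    calc r ^ (n+1) * (|Real.cos (((n:ℝ)+1)*y)| * ((n:ℝ)+1))
        ≤ r ^ (n+1) * (1 * ((n:ℝ)+1)) := by
          gcongr
          exact Real.abs_cos_le_one _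
    _ ≤ r ^ (n+1) * ((n:ℝ)+1)^2 := by
          have h2 : ((n:ℝ)+1) ≤ ((n:ℝ)+1)^2 := by nlinarith
          have h3 := mul_le_mul_of_nonneg_left h2 (pow_nonneg hr0 (n+1))
          linarith
  have hu : Summable (fun n : ℕ => r ^ (n + 1)) :=
    ((summable_geometric_of_lt_one hr0 hr1).mul_left r).congr fun n => by rw [← pow_succ']
  have hg0 : Summable fun n => g n 0 := by
    apply summable_zero.congr
    intro n
    simp [hg_def]
  have hP : ∀ y, HasDerivAt (fun z => ∑' n, g n z) (∑' n, g' n y) y := fun y =>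
    hasDerivAt_tsum hu hderiv hbound hg0 y
  have hsum_deriv : ∀ y, (∑' n, g' n y)
      = Real.log (‖1 - r * Complex.exp (y * Complex.I)‖) := by
    intro y
    rw [show (fun n => g' n y)
        = (fun n : ℕ => -(r ^ (n + 1) * Real.cos (((n : ℝ) + 1) * y) / ((n : ℝ) + 1))) from
      funext fun n => by
        have hc1 : ((n : ℝ) + 1) ≠ 0 := by positivity
        simp only [hg'_def]
        field_simp]
    exact (taylor_hasSum r hr0 hr1 y).tsum_eq
  have hcont : Continuous
      (fun t : ℝ => Real.log (‖1 - r * Complex.exp (t * Complex.I)‖)) := by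
    have hc : Continuous fun t : ℝ => ‖1 - r * Complex.exp (t * Complex.I)‖ :=
      continuous_norm.comp (continuous_const.sub (continuous_const.mul
        (Complex.continuous_exp.comp (Complex.continuous_ofReal.mul continuous_const))))
    apply hc.log
    intro t
    have habs : ‖↑r * Complex.exp (t * Complex.I)‖ = r := by
      rw [norm_mul, Complex.norm_exp_ofReal_mul_I, Complex.norm_real, Real.norm_eq_abs, abs_of_nonneg hr0, mul_one]
    intro h0
    rw [norm_eq_zero, sub_eq_zero] at h0
    have : (1:ℝ) = r := by
      have := congrArg Norm.norm h0
      rwa [norm_one, habs] at this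
    linarith
  have hFTC := intervalIntegral.integral_eq_sub_of_hasDerivAt
    (f := fun z => ∑' n, g n z)
    (f' := fun t => Real.log (‖1 - r * Complex.exp (t * Complex.I)‖))
    (fun y _ => by
      have h := hP y
      rw [hsum_deriv y] at h
      exact h) (hcont.intervalIntegrable 0 x)
  rw [hFTC]
  have hP0 : (∑' n, g n 0) = 0 := by
    have he : (fun n => g n 0) = fun _ : ℕ => (0:ℝ) := funext fun n => by simp [hg_def]
    rw [he, tsum_zero]
  have hPx : (fun n => g n x)
      = fun n : ℕ => -(r ^ (n + 1) * Real.sin (((n : ℝ) + 1) * x) / ((n : ℝ) + 1) ^ 2) :=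
    funext fun n => by rw [hg_def]; ring
  show (∑' n, g n x) - (∑' n, g n 0) = _
  rw [hP0, sub_zero, hPx, tsum_neg]

lemma D_base_summable : Summable (fun j : ℕ => 1 / ((j : ℝ) + 1) ^ 2) := by
  have h := (Real.summable_one_div_nat_pow (p := 2)).mpr one_lt_two
  have h2 := (summable_nat_add_iff 1).mpr h
  apply h2.congr
  intro n
  push_cast
  ring

lemma D_summable (θ : ℝ) :
    Summable (fun j : ℕ => Real.sin (((j : ℝ) + 1) * θ) / ((j : ℝ) + 1) ^ 2) := by
  apply Summable.of_norm_bounded D_base_summable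
  intro j
  rw [Real.norm_eq_abs, abs_div, abs_of_pos (by positivity : (0:ℝ) < ((j:ℝ)+1)^2)]
  exact div_le_div_of_nonneg_right (abs_le.mpr ⟨Real.neg_one_le_sin _, Real.sin_le_one _⟩)
    (by positivity)

lemma FF_bound (r : ℝ) (hrh : 1 / 2 ≤ r) (hr1 : r ≤ 1) (t : ℝ)
    (ht : Complex.exp (t * Complex.I) ≠ 1) :
    |Real.log (‖1 - r * Complex.exp (t * Complex.I)‖)| ≤ |logDist t| + 2 := by
  set w : ℂ := Complex.exp (t * Complex.I) with hw_def
  set A := ‖1 - r * w‖ with hA_def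
  set B := ‖1 - w‖ with hB_def
  have hB : 0 < B := by
    rw [hB_def]
    exact norm_pos_iff.mpr (sub_ne_zero.mpr (Ne.symm ht))
  have hw1 : ‖w‖ = 1 := Complex.norm_exp_ofReal_mul_I t
  have hw2 : w.re * w.re + w.im * w.im = 1 := by
    have := Complex.sq_norm w
    rw [hw1, Complex.normSq_apply] at this
    linarith [this]
  have hwre : w.re ≤ 1 := by
    rw [hw_def, Complex.exp_ofReal_mul_I_re]
    exact Real.cos_le_one t
  have hsqrt2 : (0:ℝ) < Real.sqrt 2 := Real.sqrt_pos.mpr (by norm_num)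
  have hA2 : A ≤ 2 := by
    rw [hA_def]
    calc ‖(1:ℂ) - ↑r * w‖ ≤ ‖(1:ℂ)‖ + ‖(↑r * w : ℂ)‖ := norm_sub_le _ _
    _ = 1 + |r| * 1 := by
        rw [norm_one, norm_mul, Complex.norm_real, Real.norm_eq_abs, hw1]
    _ ≤ 2 := by rw [abs_of_nonneg (by linarith)]; linarith
  have hsq : (B / Real.sqrt 2) ^ 2 ≤ A ^ 2 := by
    rw [div_pow, Real.sq_sqrt (by norm_num : (0:ℝ) ≤ 2), hA_def, hB_def,
      Complex.sq_norm, Complex.sq_norm, Complex.normSq_apply, Complex.normSq_apply]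
    simp only [Complex.sub_re, Complex.one_re, Complex.sub_im, Complex.one_im,
      Complex.mul_re, Complex.mul_im, Complex.ofReal_re, Complex.ofReal_im]
    rw [div_le_iff₀ (by norm_num : (0:ℝ) < 2)]
    nlinarith [sq_nonneg (r - 1), hw2, hwre, hrh]
  have hAB : B / Real.sqrt 2 ≤ A := by
    have h := Real.sqrt_le_sqrt hsq
    rwa [Real.sqrt_sq (by positivity), Real.sqrt_sq (norm_nonneg _)] at h
  have hApos : 0 < A := lt_of_lt_of_le (by positivity) hAB
  have hlogs2 : Real.log (Real.sqrt 2) ≤ 1 := by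
    have h1 := Real.log_le_sub_one_of_pos hsqrt2
    have h2 : Real.sqrt 2 ≤ 2 := by
      nlinarith [Real.sq_sqrt (show (0:ℝ) ≤ 2 by norm_num), Real.sqrt_nonneg 2]
    linarith
  have hlogB : Real.log B = logDist t := rfl
  rw [abs_le]
  constructor
  · have h1 : Real.log (B / Real.sqrt 2) ≤ Real.log A := Real.log_le_log (by positivity) hAB
    rw [Real.log_div hB.ne' hsqrt2.ne'] at h1
    have h2 : -|Real.log B| ≤ Real.log B := neg_abs_le _
    rw [← hlogB]
    linarith
  · have h1 : Real.log A ≤ A - 1 := Real.log_le_sub_one_of_pos hApos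
    have h2 : (0:ℝ) ≤ |Real.log B| := abs_nonneg _
    rw [← hlogB]
    linarith

lemma ae_exp_ne_one : ∀ᵐ t : ℝ, Complex.exp (t * Complex.I) ≠ 1 := by
  have hcount : Set.Countable {t : ℝ | Complex.exp (t * Complex.I) = 1} := by
    apply Set.Countable.mono ?_ (Set.countable_range (fun n : ℤ => (n : ℝ) * (2 * π)))
    intro t ht
    simp only [Set.mem_setOf_eq] at ht
    rw [Complex.exp_eq_one_iff] at ht
    obtain ⟨n, hn⟩ := ht
    refine ⟨n, ?_⟩
    rw [show ((n:ℂ)) * (2 * ↑π * Complex.I) = ↑((n:ℝ) * (2 * π)) * Complex.I by push_cast; ring]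
      at hn
    have h2 : (t : ℂ) = ↑((n:ℝ) * (2 * π)) := mul_right_cancel₀ Complex.I_ne_zero hn
    exact_mod_cast h2.symm
  have hz := hcount.measure_zero volume
  rw [ae_iff]
  convert hz using 2
  simp

lemma core (x : ℝ) : ∫ t in (0:ℝ)..x, logDist t = -blochWignerD x := by
  set rs : ℕ → ℝ := fun k => 1 - ((k : ℝ) + 2)⁻¹ with hrs_def
  have hinv : ∀ k : ℕ, 0 < ((k : ℝ) + 2)⁻¹ ∧ ((k : ℝ) + 2)⁻¹ ≤ 1 / 2 := by
    intro k
    constructor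
    · positivity
    · have h2 : (2:ℝ) ≤ (k : ℝ) + 2 := by linarith [(Nat.cast_nonneg k : (0:ℝ) ≤ (k:ℝ))]
      calc ((k : ℝ) + 2)⁻¹ ≤ (2:ℝ)⁻¹ := by
            apply inv_anti₀ (show (0:ℝ) < 2 by norm_num) h2
      _ = 1 / 2 := by norm_num
  have hrh : ∀ k, 1 / 2 ≤ rs k := by
    intro k
    have := hinv k
    rw [hrs_def]
    simp only
    linarith [this.1, this.2]
  have hr0 : ∀ k, 0 ≤ rs k := fun k => le_trans (by norm_num) (hrh k)
  have hr1 : ∀ k, rs k < 1 := by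
    intro k
    have := (hinv k).1
    rw [hrs_def]
    simp only
    linarith
  have htends : Tendsto rs atTop (𝓝 1) := by
    have h1 : Tendsto (fun k : ℕ => ((k : ℝ) + 2)) atTop atTop :=
      tendsto_atTop_add_const_right atTop 2 tendsto_natCast_atTop_atTop
    have h2 := h1.inv_tendsto_atTop
    have h3 := tendsto_const_nhds.sub h2 (f := fun _ : ℕ => (1:ℝ))
    simpa using h3
  -- side 2 : sums converge to blochWignerD x
  have hS : Tendsto (fun k => ∑' n : ℕ, rs k ^ (n + 1) * Real.sin (((n : ℝ) + 1) * x)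
      / ((n : ℝ) + 1) ^ 2) atTop (𝓝 (blochWignerD x)) := by
    have h := tendsto_tsum_of_dominated_convergence (𝓕 := atTop)
      (f := fun (k : ℕ) (n : ℕ) => rs k ^ (n + 1) * Real.sin (((n : ℝ) + 1) * x)
        / ((n : ℝ) + 1) ^ 2)
      (g := fun n : ℕ => Real.sin (((n : ℝ) + 1) * x) / ((n : ℝ) + 1) ^ 2)
      (bound := fun n : ℕ => 1 / ((n : ℝ) + 1) ^ 2)
      D_base_summable
      (fun n => by
        have h1 : Tendsto (fun k => rs k ^ (n + 1)) atTop (𝓝 1) := by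
          have := htends.pow (n + 1)
          simpa using this
        have h2 := h1.mul_const (Real.sin (((n : ℝ) + 1) * x) / ((n : ℝ) + 1) ^ 2)
        rw [one_mul] at h2
        apply h2.congr
        intro k
        ring)
      (Filter.Eventually.of_forall fun k n => by
        rw [Real.norm_eq_abs, abs_div, abs_of_pos (by positivity : (0:ℝ) < ((n:ℝ)+1)^2),
          abs_mul, abs_of_nonneg (pow_nonneg (hr0 k) _)]
        apply div_le_div_of_nonneg_right ?_ (by positivity)
        calc rs k ^ (n+1) * |Real.sin (((n:ℝ)+1)*x)|
            ≤ 1 * 1 := by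
              apply mul_le_mul (pow_le_one₀ (hr0 k) (hr1 k).le)
                (abs_le.mpr ⟨Real.neg_one_le_sin _, Real.sin_le_one _⟩) (abs_nonneg _)
                (by norm_num)
        _ = 1 := by norm_num)
    exact h
  -- side 1 : integrals converge
  have hI : Tendsto (fun k => ∫ t in (0:ℝ)..x,
      Real.log (‖1 - rs k * Complex.exp (t * Complex.I)‖)) atTop
      (𝓝 (∫ t in (0:ℝ)..x, logDist t)) := by
    apply intervalIntegral.tendsto_integral_filter_of_dominated_convergence
      (bound := fun t => |logDist t| + 2)
    · apply Filter.Eventually.of_forall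
      intro k
      have hc : Continuous fun t : ℝ =>
          Real.log (‖1 - rs k * Complex.exp (t * Complex.I)‖) := by
        apply Continuous.log
        · exact continuous_norm.comp (continuous_const.sub (continuous_const.mul
            (Complex.continuous_exp.comp (Complex.continuous_ofReal.mul continuous_const))))
        · intro t
          have habs : ‖↑(rs k) * Complex.exp (t * Complex.I)‖ = rs k := by
            rw [norm_mul, Complex.norm_exp_ofReal_mul_I, Complex.norm_real, Real.norm_eq_abs,
              abs_of_nonneg (hr0 k), mul_one]
          intro h0
          rw [norm_eq_zero, sub_eq_zero] at h0
          have h1 : (1:ℝ) = rs k := by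
            have := congrArg Norm.norm h0
            rwa [norm_one, habs] at this
          linarith [hr1 k]
      exact hc.aestronglyMeasurable
    · apply Filter.Eventually.of_forall
      intro k
      filter_upwards [ae_exp_ne_one] with t ht _
      rw [Real.norm_eq_abs]
      exact FF_bound (rs k) (hrh k) (hr1 k).le t ht
    · exact ((logDist_int 0 x).abs.add intervalIntegrable_const)
    · filter_upwards [ae_exp_ne_one] with t ht _
      have hBpos : 0 < ‖1 - Complex.exp (t * Complex.I)‖ :=
        norm_pos_iff.mpr (sub_ne_zero.mpr (Ne.symm ht))
      have hcont1 : ContinuousAt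
          (fun ρ : ℝ => Real.log (‖1 - ρ * Complex.exp (t * Complex.I)‖)) 1 := by
        apply ContinuousAt.log
        · exact (continuous_norm.comp (continuous_const.sub
            (Complex.continuous_ofReal.mul continuous_const))).continuousAt
        · simpa using hBpos.ne'
      have h := hcont1.tendsto.comp htends
      simp only [Function.comp_def] at h
      simpa [logDist] using h
  -- combine
  have hrw : (fun k => ∫ t in (0:ℝ)..x,
      Real.log (‖1 - rs k * Complex.exp (t * Complex.I)‖))
      = fun k => -∑' n : ℕ, rs k ^ (n + 1) * Real.sin (((n : ℝ) + 1) * x)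
        / ((n : ℝ) + 1) ^ 2 :=
    funext fun k => integral_r_lt_one (rs k) (hr0 k) (hr1 k) x
  rw [hrw] at hI
  have hD : blochWignerD x = ∑' n : ℕ, Real.sin (((n : ℝ) + 1) * x) / ((n : ℝ) + 1) ^ 2 := rfl
  rw [hD]
  exact tendsto_nhds_unique hI hS.neg

/-- For a positive integer `n` and reals `a ≤ b`,
`∫_a^b log|1 − e^{inθ}| dθ = (D(na) − D(nb))/n`. -/
theorem integral_log_abs_one_sub_exp (n : ℕ) (hn : 0 < n) (a b : ℝ) (hab : a ≤ b) :
    ∫ θ in a..b, Real.log (‖1 - Complex.exp ((n : ℝ) * θ * Complex.I)‖) =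
      (blochWignerD (n * a) - blochWignerD (n * b)) / n := by
  have hn' : ((n : ℝ)) ≠ 0 := Nat.cast_ne_zero.mpr hn.ne'
  have hinteg : ∀ θ : ℝ,
      Real.log (‖1 - Complex.exp ((n : ℝ) * θ * Complex.I)‖)
        = logDist ((n : ℝ) * θ) := by
    intro θ
    unfold logDist
    rw [Complex.ofReal_mul]
  simp_rw [hinteg]
  rw [intervalIntegral.integral_comp_mul_left (fun t => logDist t) hn']
  have hsub := intervalIntegral.integral_interval_sub_left
    (logDist_int 0 ((n : ℝ) * b)) (logDist_int 0 ((n : ℝ) * a))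
  rw [← hsub, core, core, smul_eq_mul]
  field_simp
  ring
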